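/- For every δ > 0 there exists a frog-strategy S such that Succ(S, A_{sp}) ≥ 1 − δ, where A_{sp} := {b ∈ {0,1}^ω : lim_{t→∞} N_t(b)/t = 0} is the set of sparse sequences. -/

import Mathlib

/-- A frog-strategy: for each infinite binary sequence `b` (0-indexed: `b i` is bit `b_{i+1}`),
a probability distribution on `ℕ ∪ {∞}`, where `some i` means "cross at minute `i+1`" and
`none` means "wait forever".  The distribution at minute `i+1` may depend only on the
first `i` bits of `b`. -/
structure FrogStrategy where
  prob : (ℕ → Bool) → Option ℕ → ℝ
  nonneg : ∀ b o, 0 ≤ prob b o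
  total : ∀ b, ∑' o : Option ℕ, prob b o = 1
  adapted : ∀ b b' : ℕ → Bool, ∀ i : ℕ,
    (∀ j, j < i → b j = b' j) → prob b (some i) = prob b' (some i)

/-- Success probability: total probability of crossing at a minute with no car. -/
noncomputable def succProb (S : FrogStrategy) (b : ℕ → Bool) : ℝ :=
  ∑' i : ℕ, if b i = false then S.prob b (some i) else 0

/-- Death probability: total probability of crossing at a minute with a car. -/
noncomputable def deathProb (S : FrogStrategy) (b : ℕ → Bool) : ℝ :=
  ∑' i : ℕ, if b i = true then S.prob b (some i) else 0

/-- `cars b t` is `N_t(b) = b_1 + ⋯ + b_t`, the number of cars among the first `t` minutes. -/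
def cars (b : ℕ → Bool) (t : ℕ) : ℕ :=
  ((Finset.range t).filter (fun i => b i = true)).card

/-- `b` is `ε`-weakly sparse if `lim_{s→∞} inf_{t ≥ s} N_t(b)/t ≤ ε`. -/
def epsWeaklySparse (ε : ℝ) (b : ℕ → Bool) : Prop :=
  Filter.liminf (fun t : ℕ => (cars b t : ℝ) / t) Filter.atTop ≤ ε

namespace P2

/-- current run of car-free minutes ending just before minute `i` -/
def run (b : ℕ → Bool) : ℕ → ℕ
  | 0 => 0
  | i + 1 => if b i then 0 else run b i + 1

/-- the gate: open iff the current run exceeds i/(8(N_i+1)) -/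
def gate (b : ℕ → Bool) (i : ℕ) : Prop := i < 32 * (cars b i + 1) * run b i

instance (b : ℕ → Bool) (i : ℕ) : Decidable (gate b i) := by unfold gate; infer_instance

/-- penalty counter: reflected walk, +ψ at gated car, -1 at gated safe minute -/
def Df (ψ : ℕ) (b : ℕ → Bool) : ℕ → ℕ
  | 0 => 0
  | i + 1 => if gate b i then (if b i then Df ψ b i + ψ else Df ψ b i - 1) else Df ψ b i

noncomputable def haz (c x : ℝ) (ψ : ℕ) (b : ℕ → Bool) (i : ℕ) : ℝ :=
  if gate b i then c * x ^ Df ψ b i else 0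

noncomputable def W (c x : ℝ) (ψ : ℕ) (b : ℕ → Bool) (n : ℕ) : ℝ :=
  ∏ j ∈ Finset.range n, (1 - haz c x ψ b j)

section basic

variable {c x : ℝ} {ψ : ℕ} {b : ℕ → Bool}

lemma cars_succ (b : ℕ → Bool) (i : ℕ) :
    cars b (i + 1) = cars b i + (if b i then 1 else 0) := by
  unfold cars
  rw [Finset.range_add_one, Finset.filter_insert]
  by_cases h : b i = true
  · rw [if_pos h, Finset.card_insert_of_notMem (fun hm => absurd (Finset.mem_of_mem_filter _ hm) (by simp))]
    simp [h]
  · simp [h]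

lemma cars_mono (b : ℕ → Bool) : Monotone (cars b) := fun s t hst =>
  Finset.card_le_card (Finset.filter_subset_filter _ (Finset.range_subset_range.2 hst))

lemma run_succ_of_false {b : ℕ → Bool} {i : ℕ} (h : b i = false) :
    run b (i + 1) = run b i + 1 := by
  show (if b i then 0 else run b i + 1) = run b i + 1
  simp [h]

lemma run_succ_of_true {b : ℕ → Bool} {i : ℕ} (h : b i = true) :
    run b (i + 1) = 0 := by
  show (if b i then 0 else run b i + 1) = 0
  simp [h]

/-- no cars between i and i' ⟹ run increases by the difference -/
lemma run_add {b : ℕ → Bool} {i i' : ℕ} (hle : i ≤ i')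
    (h : ∀ j, i ≤ j → j < i' → b j = false) :
    run b i' = run b i + (i' - i) := by
  induction i' with
  | zero =>
    have : i = 0 := by omega
    subst this; simp
  | succ k ih =>
    rcases Nat.lt_or_ge i (k+1) with hlt | hge
    · have hik : i ≤ k := by omega
      have hk : b k = false := h k hik (by omega)
      rw [run_succ_of_false hk, ih hik (fun j hj hj' => h j hj (by omega))]
      omega
    · have : i = k + 1 := by omega
      subst this; simp

lemma haz_nonneg (hc : 0 ≤ c) (hx : 0 ≤ x) (i : ℕ) : 0 ≤ haz c x ψ b i := by
  unfold haz
  split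
  · positivity
  · exact le_refl 0

lemma haz_le (hc : 0 ≤ c) (hx : 0 ≤ x) (hx1 : x ≤ 1) (i : ℕ) : haz c x ψ b i ≤ c := by
  unfold haz
  split
  · calc c * x ^ Df ψ b i ≤ c * 1 := by
          apply mul_le_mul_of_nonneg_left _ hc
          exact pow_le_one₀ hx hx1
      _ = c := mul_one c
  · exact hc

lemma W_succ (n : ℕ) : W c x ψ b (n + 1) = W c x ψ b n * (1 - haz c x ψ b n) :=
  Finset.prod_range_succ _ n

lemma W_zero : W c x ψ b 0 = 1 := Finset.prod_range_zero _

lemma W_nonneg (hc : 0 ≤ c) (hx : 0 ≤ x) (hx1 : x ≤ 1) (hc1 : c ≤ 1) (n : ℕ) :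
    0 ≤ W c x ψ b n := by
  apply Finset.prod_nonneg
  intro j _
  have := haz_le (b := b) (ψ := ψ) hc hx hx1 j
  linarith

lemma W_le_one (hc : 0 ≤ c) (hx : 0 ≤ x) (hx1 : x ≤ 1) (hc1 : c ≤ 1) (n : ℕ) :
    W c x ψ b n ≤ 1 := by
  apply Finset.prod_le_one
  · intro j _
    have := haz_le (b := b) (ψ := ψ) hc hx hx1 j
    linarith
  · intro j _
    have := haz_nonneg (b := b) (ψ := ψ) hc hx j
    linarith

lemma W_antitone (hc : 0 ≤ c) (hx : 0 ≤ x) (hx1 : x ≤ 1) (hc1 : c ≤ 1) :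
    Antitone (W c x ψ b) := by
  apply antitone_nat_of_succ_le
  intro n
  rw [W_succ]
  have h0 := haz_nonneg (b := b) (ψ := ψ) hc hx n
  have hW := W_nonneg (b := b) (ψ := ψ) hc hx hx1 hc1 n
  nlinarith

/-- telescoping: partial sums of crossing mass -/
lemma sum_hW (n : ℕ) :
    ∑ i ∈ Finset.range n, haz c x ψ b i * W c x ψ b i = 1 - W c x ψ b n := by
  induction n with
  | zero => simp [W_zero]
  | succ k ih =>
    rw [Finset.sum_range_succ, ih, W_succ]
    ring

end basic

section congr

variable {c x : ℝ} {ψ : ℕ}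

lemma cars_congr {b b' : ℕ → Bool} {i : ℕ} (h : ∀ j, j < i → b j = b' j) :
    cars b i = cars b' i := by
  unfold cars
  congr 1
  apply Finset.filter_congr
  intro j hj
  rw [h j (Finset.mem_range.1 hj)]

lemma run_congr {b b' : ℕ → Bool} : ∀ {i : ℕ}, (∀ j, j < i → b j = b' j) →
    run b i = run b' i
  | 0, _ => rfl
  | i + 1, h => by
    have hi : run b i = run b' i := run_congr (fun j hj => h j (by omega))
    show (if b i then 0 else run b i + 1) = (if b' i then 0 else run b' i + 1)
    rw [h i (by omega), hi]

lemma gate_congr {b b' : ℕ → Bool} {i : ℕ} (h : ∀ j, j < i → b j = b' j) :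
    gate b i ↔ gate b' i := by
  unfold gate
  rw [cars_congr h, run_congr h]

lemma Df_congr {b b' : ℕ → Bool} : ∀ {i : ℕ}, (∀ j, j < i → b j = b' j) →
    Df ψ b i = Df ψ b' i
  | 0, _ => rfl
  | i + 1, h => by
    have hi : Df ψ b i = Df ψ b' i := Df_congr (fun j hj => h j (by omega))
    have hg := gate_congr (b := b) (b' := b') (i := i) (fun j hj => h j (by omega))
    show (if gate b i then (if b i then Df ψ b i + ψ else Df ψ b i - 1) else Df ψ b i)
      = (if gate b' i then (if b' i then Df ψ b' i + ψ else Df ψ b' i - 1) else Df ψ b' i)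
    rw [h i (by omega), hi]
    by_cases hgb : gate b i
    · rw [if_pos hgb, if_pos (hg.1 hgb)]
    · rw [if_neg hgb, if_neg (fun hh => hgb (hg.2 hh))]

lemma haz_congr {b b' : ℕ → Bool} {i : ℕ}
    (h' : ∀ j, j < i → b j = b' j) : haz c x ψ b i = haz c x ψ b' i := by
  unfold haz
  have hg := gate_congr (b := b) (b' := b') (i := i) h'
  rw [Df_congr h']
  by_cases hgb : gate b i
  · rw [if_pos hgb, if_pos (hg.1 hgb)]
  · rw [if_neg hgb, if_neg (fun hh => hgb (hg.2 hh))]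

lemma W_congr {b b' : ℕ → Bool} {i : ℕ} (h : ∀ j, j < i → b j = b' j) :
    W c x ψ b i = W c x ψ b' i := by
  unfold W
  apply Finset.prod_congr rfl
  intro j hj
  have hj' := Finset.mem_range.1 hj
  rw [haz_congr (b:=b) (b':=b') (fun k hk => h k (by omega))]

end congr

section sums

variable {c x : ℝ} {ψ : ℕ} {b : ℕ → Bool}

noncomputable def WInf (c x : ℝ) (ψ : ℕ) (b : ℕ → Bool) : ℝ := ⨅ n, W c x ψ b n

lemma WInf_nonneg (hc : 0 ≤ c) (hc1 : c ≤ 1) (hx : 0 ≤ x) (hx1 : x ≤ 1) :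
    0 ≤ WInf c x ψ b :=
  le_ciInf (fun n => W_nonneg hc hx hx1 hc1 n)

lemma bddBelow_W (hc : 0 ≤ c) (hc1 : c ≤ 1) (hx : 0 ≤ x) (hx1 : x ≤ 1) :
    BddBelow (Set.range (W c x ψ b)) := by
  refine ⟨0, ?_⟩
  rintro y ⟨n, rfl⟩
  exact W_nonneg hc hx hx1 hc1 n

lemma tendsto_W (hc : 0 ≤ c) (hc1 : c ≤ 1) (hx : 0 ≤ x) (hx1 : x ≤ 1) :
    Filter.Tendsto (W c x ψ b) Filter.atTop (nhds (WInf c x ψ b)) :=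
  tendsto_atTop_ciInf (W_antitone hc hx hx1 hc1) (bddBelow_W hc hc1 hx hx1)

lemma summable_hW (hc : 0 ≤ c) (hc1 : c ≤ 1) (hx : 0 ≤ x) (hx1 : x ≤ 1) :
    Summable (fun i => haz c x ψ b i * W c x ψ b i) := by
  apply summable_of_sum_range_le (c := 1)
    (fun i => mul_nonneg (haz_nonneg hc hx i) (W_nonneg hc hx hx1 hc1 i))
  intro n
  rw [sum_hW]
  have := W_nonneg (b := b) (ψ := ψ) hc hx hx1 hc1 n
  linarith

lemma hasSum_hW (hc : 0 ≤ c) (hc1 : c ≤ 1) (hx : 0 ≤ x) (hx1 : x ≤ 1) :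
    HasSum (fun i => haz c x ψ b i * W c x ψ b i) (1 - WInf c x ψ b) := by
  have hs := summable_hW (b := b) (ψ := ψ) hc hc1 hx hx1
  have h1 := hs.hasSum.tendsto_sum_nat
  have h2 : Filter.Tendsto
      (fun n => ∑ i ∈ Finset.range n, haz c x ψ b i * W c x ψ b i)
      Filter.atTop (nhds (1 - WInf c x ψ b)) := by
    have := (tendsto_const_nhds (x := (1:ℝ)) (f := Filter.atTop (α := ℕ))).sub
      (tendsto_W (b := b) (ψ := ψ) hc hc1 hx hx1)
    simpa [sum_hW] using this
  have heq := tendsto_nhds_unique h1 h2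
  exact heq ▸ hs.hasSum

/-- the option-valued probability function of the strategy -/
noncomputable def sprob (c x : ℝ) (ψ : ℕ) (b : ℕ → Bool) : Option ℕ → ℝ
  | none => WInf c x ψ b
  | some i => haz c x ψ b i * W c x ψ b i

lemma hasSum_sprob (hc : 0 ≤ c) (hc1 : c ≤ 1) (hx : 0 ≤ x) (hx1 : x ≤ 1) :
    HasSum (sprob c x ψ b) 1 := by
  have g1 : HasSum (fun o : Option ℕ => if o = none then WInf c x ψ b else 0)
      (WInf c x ψ b) := hasSum_ite_eq none _
  have g2 : HasSum (fun o : Option ℕ => Option.elim o 0 (fun i => haz c x ψ b i * W c x ψ b i))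
      (1 - WInf c x ψ b) := by
    rw [← Function.Injective.hasSum_iff (Option.some_injective ℕ)
      (by rintro ⟨⟩ hx2 <;> simp at hx2 ⊢)]
    exact hasSum_hW hc hc1 hx hx1
  have := g1.add g2
  have heq : (fun o : Option ℕ =>
      (if o = none then WInf c x ψ b else 0) +
        Option.elim o 0 (fun i => haz c x ψ b i * W c x ψ b i)) = sprob c x ψ b := by
    funext o
    cases o <;> simp [sprob]
  rw [heq] at this
  simpa using this

end sums

section death

variable {c x lam : ℝ} {ψ : ℕ} {b : ℕ → Bool}

noncomputable def Rf (c x : ℝ) (ψ : ℕ) (b : ℕ → Bool) (i : ℕ) : ℝ := c * x ^ Df ψ b i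

noncomputable def Vf (A c x : ℝ) (ψ : ℕ) (b : ℕ → Bool) (i : ℕ) : ℝ :=
  A * W c x ψ b i * Rf c x ψ b i

lemma haz_eq_gate {i : ℕ} (hg : gate b i) : haz c x ψ b i = Rf c x ψ b i := by
  unfold haz Rf; rw [if_pos hg]

lemma haz_eq_nogate {i : ℕ} (hg : ¬ gate b i) : haz c x ψ b i = 0 := by
  unfold haz; rw [if_neg hg]

lemma Df_succ_car {i : ℕ} (hg : gate b i) (hb : b i = true) :
    Df ψ b (i + 1) = Df ψ b i + ψ := by
  show (if gate b i then (if b i then Df ψ b i + ψ else Df ψ b i - 1) else Df ψ b i) = _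
  rw [if_pos hg, if_pos hb]

lemma Df_succ_safe {i : ℕ} (hg : gate b i) (hb : b i = false) :
    Df ψ b (i + 1) = Df ψ b i - 1 := by
  show (if gate b i then (if b i then Df ψ b i + ψ else Df ψ b i - 1) else Df ψ b i) = _
  rw [if_pos hg, hb]; simp

lemma Df_succ_nogate {i : ℕ} (hg : ¬ gate b i) :
    Df ψ b (i + 1) = Df ψ b i := by
  show (if gate b i then (if b i then Df ψ b i + ψ else Df ψ b i - 1) else Df ψ b i) = _
  rw [if_neg hg]

lemma Df_zero : Df ψ b 0 = 0 := rfl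

lemma Rf_nonneg (hc : 0 ≤ c) (hx : 0 ≤ x) (i : ℕ) : 0 ≤ Rf c x ψ b i := by
  unfold Rf; positivity

lemma Rf_le (hc : 0 ≤ c) (hx : 0 ≤ x) (hx1 : x ≤ 1) (i : ℕ) : Rf c x ψ b i ≤ c := by
  unfold Rf
  calc c * x ^ Df ψ b i ≤ c * 1 :=
        mul_le_mul_of_nonneg_left (pow_le_one₀ hx hx1) hc
    _ = c := mul_one c

lemma Rf_succ_car {i : ℕ} (hg : gate b i) (hb : b i = true) :
    Rf c x ψ b (i + 1) = Rf c x ψ b i * x ^ ψ := by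
  unfold Rf; rw [Df_succ_car hg hb, pow_add]; ring

lemma Rf_succ_safe_mul {i : ℕ} (hc : 0 ≤ c) (hx : 0 ≤ x) (hx1 : x ≤ 1)
    (hg : gate b i) (hb : b i = false) :
    Rf c x ψ b (i + 1) * x ≤ Rf c x ψ b i := by
  unfold Rf
  rw [Df_succ_safe hg hb]
  rcases Nat.eq_zero_or_pos (Df ψ b i) with h0 | hpos
  · rw [h0]; simp
    nlinarith [pow_le_one₀ hx hx1 (n := 0)]
  · have : Df ψ b i - 1 + 1 = Df ψ b i := by omega
    calc c * x ^ (Df ψ b i - 1) * x = c * x ^ (Df ψ b i - 1 + 1) := by ring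
      _ = c * x ^ Df ψ b i := by rw [this]
      _ ≤ c * x ^ Df ψ b i := le_refl _

lemma Rf_succ_nogate {i : ℕ} (hg : ¬ gate b i) :
    Rf c x ψ b (i + 1) = Rf c x ψ b i := by
  unfold Rf; rw [Df_succ_nogate hg]

/-- main potential induction: death partial sums are controlled -/
lemma death_partial (A : ℝ) (hA : 0 ≤ A)
    (hc : 0 < c) (hc1 : c ≤ 1) (hx : 0 < x) (hx1 : x ≤ 1)
    (hlam : 0 ≤ lam) (hxlam : x * (1 + lam) = 1)
    (hA1 : 1 ≤ A * (1 - x ^ ψ)) :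
    ∀ n, (∑ i ∈ Finset.range n, if b i = true then haz c x ψ b i * W c x ψ b i else 0)
        + Vf A c x ψ b n
      ≤ A * c + A * lam *
        (∑ i ∈ Finset.range n, if b i = true then 0 else haz c x ψ b i * W c x ψ b i) := by
  intro n
  induction n with
  | zero =>
    simp [Vf, W_zero, Rf, Df_zero]
  | succ k ih =>
    rw [Finset.sum_range_succ, Finset.sum_range_succ]
    have hWn := W_nonneg (b := b) (ψ := ψ) hc.le hx.le hx1 hc1 k
    have hRn := Rf_nonneg (b := b) (ψ := ψ) hc.le hx.le k
    have hRle := Rf_le (b := b) (ψ := ψ) hc.le hx.le hx1 k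
    have hxψ : (0:ℝ) ≤ x ^ ψ := pow_nonneg hx.le ψ
    by_cases hg : gate b k
    · have hhaz := haz_eq_gate (c := c) (x := x) (ψ := ψ) hg
      by_cases hbk : b k = true
      · -- gated car: death step, potential drops enough
        have hstep : haz c x ψ b k * W c x ψ b k + Vf A c x ψ b (k+1) ≤ Vf A c x ψ b k := by
          unfold Vf
          rw [W_succ, Rf_succ_car hg hbk, hhaz]
          have key : 1 ≤ A * (1 - (1 - Rf c x ψ b k) * x ^ ψ) := by nlinarith [mul_nonneg (mul_nonneg hA hRn) hxψ]
          nlinarith [mul_nonneg hWn hRn, mul_le_mul_of_nonneg_left key (mul_nonneg hWn hRn)]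
        rw [if_pos hbk, if_pos hbk]
        linarith
      · -- gated safe minute: potential rises a little, compensated by income
        have hstep : Vf A c x ψ b (k+1) ≤ Vf A c x ψ b k
            + A * lam * (haz c x ψ b k * W c x ψ b k) := by
          have hxpos : (0:ℝ) < x := hx
          rw [← mul_le_mul_iff_left₀ hxpos]
          unfold Vf
          rw [W_succ, hhaz]
          have hb' : b k = false := by simpa using hbk
          have hRS := Rf_succ_safe_mul (b := b) (ψ := ψ) hc.le hx.le hx1 hg hb'
          have hRS' : A * (W c x ψ b k * (1 - Rf c x ψ b k)) * (Rf c x ψ b (k+1) * x)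
              ≤ A * (W c x ψ b k * (1 - Rf c x ψ b k)) * Rf c x ψ b k := by
            apply mul_le_mul_of_nonneg_left hRS
            apply mul_nonneg hA
            apply mul_nonneg hWn
            linarith
          calc A * (W c x ψ b k * (1 - Rf c x ψ b k)) * Rf c x ψ b (k+1) * x
              = A * (W c x ψ b k * (1 - Rf c x ψ b k)) * (Rf c x ψ b (k+1) * x) := by
                ring
            _ ≤ A * (W c x ψ b k * (1 - Rf c x ψ b k)) * Rf c x ψ b k := hRS'
            _ ≤ (A * W c x ψ b k * Rf c x ψ b k
                + A * lam * (Rf c x ψ b k * W c x ψ b k)) * x := by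
                have hexp : (A * W c x ψ b k * Rf c x ψ b k
                    + A * lam * (Rf c x ψ b k * W c x ψ b k)) * x
                    = A * W c x ψ b k * Rf c x ψ b k * ((1 + lam) * x) := by ring
                rw [hexp, mul_comm (1 + lam) x, hxlam, mul_one]
                nlinarith [mul_nonneg (mul_nonneg hA hWn) (mul_nonneg hRn hRn)]
        rw [if_neg hbk, if_neg hbk]
        have hhW : 0 ≤ haz c x ψ b k * W c x ψ b k :=
          mul_nonneg (haz_nonneg hc.le hx.le k) hWn
        linarith
    · -- gate closed: nothing changes
      have h0 := haz_eq_nogate (c := c) (x := x) (ψ := ψ) hg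
      have hV : Vf A c x ψ b (k+1) = Vf A c x ψ b k := by
        unfold Vf
        rw [W_succ, Rf_succ_nogate hg, h0]
        ring
      rw [h0, hV]
      by_cases hbk : b k = true
      · rw [if_pos hbk, if_pos hbk]; simpa using ih
      · rw [if_neg hbk, if_neg hbk]
        simp only [zero_mul, add_zero]
        have hs0 : (0:ℝ) ≤ A * lam * (0 * W c x ψ b k) := by simp
        linarith

end death

section acct

variable {c x lam : ℝ} {ψ : ℕ} {b : ℕ → Bool}

lemma summable_death (hc : 0 ≤ c) (hc1 : c ≤ 1) (hx : 0 ≤ x) (hx1 : x ≤ 1) :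
    Summable (fun i => if b i = true then haz c x ψ b i * W c x ψ b i else 0) := by
  apply Summable.of_nonneg_of_le _ _ (summable_hW (b := b) (ψ := ψ) hc hc1 hx hx1)
  · intro i
    by_cases h : b i = true
    · rw [if_pos h]
      exact mul_nonneg (haz_nonneg hc hx i) (W_nonneg hc hx hx1 hc1 i)
    · rw [if_neg h]
  · intro i
    by_cases h : b i = true
    · rw [if_pos h]
    · rw [if_neg h]
      exact mul_nonneg (haz_nonneg hc hx i) (W_nonneg hc hx hx1 hc1 i)

lemma summable_succ (hc : 0 ≤ c) (hc1 : c ≤ 1) (hx : 0 ≤ x) (hx1 : x ≤ 1) :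
    Summable (fun i => if b i = false then haz c x ψ b i * W c x ψ b i else 0) := by
  apply Summable.of_nonneg_of_le _ _ (summable_hW (b := b) (ψ := ψ) hc hc1 hx hx1)
  · intro i
    by_cases h : b i = false
    · rw [if_pos h]
      exact mul_nonneg (haz_nonneg hc hx i) (W_nonneg hc hx hx1 hc1 i)
    · rw [if_neg h]
  · intro i
    by_cases h : b i = false
    · rw [if_pos h]
    · rw [if_neg h]
      exact mul_nonneg (haz_nonneg hc hx i) (W_nonneg hc hx hx1 hc1 i)

lemma death_tsum_le (A : ℝ) (hA : 0 ≤ A)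
    (hc : 0 < c) (hc1 : c ≤ 1) (hx : 0 < x) (hx1 : x ≤ 1)
    (hlam : 0 ≤ lam) (hxlam : x * (1 + lam) = 1)
    (hA1 : 1 ≤ A * (1 - x ^ ψ)) :
    (∑' i, if b i = true then haz c x ψ b i * W c x ψ b i else 0) ≤ A * (c + lam) := by
  apply Summable.tsum_le_of_sum_range_le (summable_death hc.le hc1 hx.le hx1)
  intro n
  have hmain := death_partial (b := b) A hA hc hc1 hx hx1 hlam hxlam hA1 n
  have hV : 0 ≤ Vf A c x ψ b n := by
    apply mul_nonneg (mul_nonneg hA (W_nonneg hc.le hx.le hx1 hc1 n))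
      (Rf_nonneg hc.le hx.le n)
  have hSS : (∑ i ∈ Finset.range n, if b i = true then 0 else haz c x ψ b i * W c x ψ b i)
      ≤ 1 := by
    have h1 : (∑ i ∈ Finset.range n, if b i = true then 0 else haz c x ψ b i * W c x ψ b i)
        ≤ ∑ i ∈ Finset.range n, haz c x ψ b i * W c x ψ b i := by
      apply Finset.sum_le_sum
      intro i _
      by_cases h : b i = true
      · rw [if_pos h]
        exact mul_nonneg (haz_nonneg hc.le hx.le i) (W_nonneg hc.le hx.le hx1 hc1 i)
      · rw [if_neg h]
    rw [sum_hW] at h1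
    have := W_nonneg (b := b) (ψ := ψ) hc.le hx.le hx1 hc1 n
    linarith
  nlinarith [mul_nonneg hA hlam]

lemma succ_tsum_eq (hc : 0 ≤ c) (hc1 : c ≤ 1) (hx : 0 ≤ x) (hx1 : x ≤ 1) :
    (∑' i, if b i = false then haz c x ψ b i * W c x ψ b i else 0)
      = (1 - WInf c x ψ b)
        - (∑' i, if b i = true then haz c x ψ b i * W c x ψ b i else 0) := by
  have hs := summable_succ (b := b) (ψ := ψ) hc hc1 hx hx1
  have hd := summable_death (b := b) (ψ := ψ) hc hc1 hx hx1
  have hadd := Summable.tsum_add hs hd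
  have hptw : (fun i => (if b i = false then haz c x ψ b i * W c x ψ b i else 0)
      + (if b i = true then haz c x ψ b i * W c x ψ b i else 0))
      = fun i => haz c x ψ b i * W c x ψ b i := by
    funext i
    by_cases h : b i = true
    · simp [h]
    · simp [h, Bool.eq_false_iff.2 (by simpa using h)]
  rw [hptw] at hadd
  rw [(hasSum_hW (b := b) (ψ := ψ) hc hc1 hx hx1).tsum_eq] at hadd
  linarith

end acct

section stall

open Filter

variable {c x : ℝ} {ψ : ℕ} {b : ℕ → Bool}

lemma WInf_eq_zero_of_not_summable (hc : 0 < c) (hc1 : c ≤ 1) (hx : 0 < x) (hx1 : x ≤ 1)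
    (hns : ¬ Summable (haz c x ψ b)) : WInf c x ψ b = 0 := by
  have hnn : ∀ i, 0 ≤ haz c x ψ b i := haz_nonneg hc.le hx.le
  have htop := (not_summable_iff_tendsto_nat_atTop_of_nonneg hnn).1 hns
  have hWexp : ∀ n, W c x ψ b n ≤ Real.exp (-(∑ i ∈ Finset.range n, haz c x ψ b i)) := by
    intro n
    induction n with
    | zero => simp [W_zero]
    | succ k ih =>
      rw [W_succ, Finset.sum_range_succ, neg_add, Real.exp_add]
      have h1 : 0 ≤ 1 - haz c x ψ b k := by
        have := haz_le (b := b) (ψ := ψ) hc.le hx.le hx1 k; linarith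
      have h2 : 1 - haz c x ψ b k ≤ Real.exp (-(haz c x ψ b k)) := by
        have := Real.add_one_le_exp (-(haz c x ψ b k)); linarith
      exact mul_le_mul ih h2 h1 (Real.exp_nonneg _)
  have hnegtop : Tendsto (fun n => -(∑ i ∈ Finset.range n, haz c x ψ b i)) atTop atBot :=
    Filter.tendsto_neg_atBot_iff.2 htop
  have hexp : Tendsto (fun n => Real.exp (-(∑ i ∈ Finset.range n, haz c x ψ b i)))
      atTop (nhds 0) := Real.tendsto_exp_atBot.comp hnegtop
  have hW0 : Tendsto (W c x ψ b) atTop (nhds 0) :=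
    squeeze_zero (fun n => W_nonneg hc.le hx.le hx1 hc1 n) hWexp hexp
  exact tendsto_nhds_unique (tendsto_W hc.le hc1 hx.le hx1) hW0

lemma exists_T1 (hc : 0 < c) (hx : 0 < x) (hx1 : x < 1)
    (hs : Summable (haz c x ψ b)) :
    ∃ T₁, ∀ i, T₁ ≤ i → gate b i → 2 ≤ Df ψ b i := by
  have h0 := hs.tendsto_atTop_zero
  have hev : ∀ᶠ i in atTop, haz c x ψ b i < c * x :=
    h0.eventually (gt_mem_nhds (mul_pos hc hx))
  obtain ⟨T₁, hT₁⟩ := Filter.eventually_atTop.1 hev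
  refine ⟨T₁, fun i hi hg => ?_⟩
  have h1 : haz c x ψ b i = c * x ^ Df ψ b i := by unfold haz; rw [if_pos hg]
  have h2 : c * x ^ Df ψ b i < c * x ^ 1 := by
    rw [pow_one]; rw [← h1]; exact hT₁ i hi
  have h3 : x ^ Df ψ b i < x ^ 1 := lt_of_mul_lt_mul_left h2 hc.le
  have := (pow_lt_pow_iff_right_of_lt_one₀ hx hx1).1 h3
  omega

lemma stall_invariant {T₁ : ℕ} (hD2 : ∀ i, T₁ ≤ i → gate b i → 2 ≤ Df ψ b i) :
    ∀ s, T₁ ≤ s →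
      Df ψ b s +
        (((Finset.Ico T₁ s).filter (fun i => gate b i)).filter (fun i => b i = false)).card
      = Df ψ b T₁ +
        ψ * (((Finset.Ico T₁ s).filter (fun i => gate b i)).filter
          (fun i => ¬ (b i = false))).card := by
  intro s hs
  induction s, hs using Nat.le_induction with
  | base => simp
  | succ s hs ih =>
    have hins : Finset.Ico T₁ (s+1) = insert s (Finset.Ico T₁ s) := by
      rw [Finset.Ico_add_one_right_eq_Icc, ← Finset.Ico_insert_right hs]
    rw [hins, Finset.filter_insert]
    by_cases hg : gate b s
    · rw [if_pos hg, Finset.filter_insert, Finset.filter_insert]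
      have hsn : s ∉ (Finset.Ico T₁ s).filter (fun i => gate b i) := by simp
      by_cases hbs : b s = false
      · rw [if_pos hbs, if_neg (by simp [hbs])]
        rw [Finset.card_insert_of_notMem (fun hmem => hsn (Finset.mem_of_mem_filter _ hmem))]
        have hDge := hD2 s hs hg
        have hDs := Df_succ_safe (ψ := ψ) hg hbs
        omega
      · have hbt : b s = true := by simpa using hbs
        rw [if_neg hbs, if_pos (by simp [hbs])]
        rw [Finset.card_insert_of_notMem (fun hmem => hsn (Finset.mem_of_mem_filter _ hmem))]
        have hDs := Df_succ_car (ψ := ψ) hg hbt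
        rw [hDs]
        rw [Nat.mul_succ]
        omega
    · rw [if_neg hg]
      have hDs := Df_succ_nogate (ψ := ψ) (b := b) (i := s) hg
      rw [hDs]
      exact ih

lemma opens_le {T₁ : ℕ} (hD2 : ∀ i, T₁ ≤ i → gate b i → 2 ≤ Df ψ b i)
    {s : ℕ} (hs : T₁ ≤ s) :
    ((Finset.Ico T₁ s).filter (fun i => gate b i)).card
      ≤ Df ψ b T₁ + (ψ + 1) * cars b s := by
  rw [Nat.add_mul, one_mul]
  have hsplit := Finset.card_filter_add_card_filter_not
    (s := (Finset.Ico T₁ s).filter (fun i => gate b i)) (fun i => b i = false)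
  have hinv := stall_invariant (ψ := ψ) hD2 s hs
  have hOC : (((Finset.Ico T₁ s).filter (fun i => gate b i)).filter
      (fun i => ¬ (b i = false))).card ≤ cars b s := by
    apply Finset.card_le_card
    intro i hi
    simp only [Finset.mem_filter, Finset.mem_Ico] at hi
    show i ∈ (Finset.range s).filter (fun i => b i = true)
    apply Finset.mem_filter.2
    have hlt : i < s := hi.1.1.2
    refine ⟨Finset.mem_range.2 hlt, by simpa using hi.2⟩
  -- combine
  have hOC2 : ψ * (((Finset.Ico T₁ s).filter (fun i => gate b i)).filter
      (fun i => ¬ (b i = false))).card ≤ ψ * cars b s := Nat.mul_le_mul_left ψ hOC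
  omega

end stall

section stall2

open Filter

variable {c x : ℝ} {ψ : ℕ} {b : ℕ → Bool}

lemma no_car_between {i i' : ℕ} (hcars : cars b i = cars b i')
    {j : ℕ} (h1 : i ≤ j) (h2 : j < i') : b j = false := by
  by_contra hb
  have hbt : b j = true := by simpa using hb
  have h3 : cars b (j+1) = cars b j + 1 := by rw [cars_succ, if_pos hbt]
  have l1 : cars b i ≤ cars b j := cars_mono b h1
  have l2 : cars b (j+1) ≤ cars b i' := cars_mono b (by omega)
  omega

/-- count of gate-closed minutes in a dyadic window -/
lemma closed_window_card (t : ℕ) :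
    ((Finset.Ico t (2*t)).filter (fun i => ¬ gate b i)).card
      ≤ (cars b (2*t) + 1) * ((2*t) / (32 * (cars b t + 1)) + 1) := by
  set M := (2*t) / (32 * (cars b t + 1)) with hM
  have hmem : ∀ i ∈ (Finset.Ico t (2*t)).filter (fun i => ¬ gate b i),
      (fun i => (cars b i, run b i)) i ∈
        (Finset.Icc (cars b t) (cars b (2*t))) ×ˢ (Finset.range (M+1)) := by
    intro i hi
    simp only [Finset.mem_filter, Finset.mem_Ico] at hi
    obtain ⟨⟨hti, hi2t⟩, hng⟩ := hi
    apply Finset.mem_product.2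
    constructor
    · exact Finset.mem_Icc.2 ⟨cars_mono b hti, cars_mono b (by omega)⟩
    · apply Finset.mem_range.2
      have hng' : 32 * (cars b i + 1) * run b i ≤ i := by
        unfold gate at hng; omega
      have hner : 32 * (cars b t + 1) * run b i ≤ 32 * (cars b i + 1) * run b i := by
        apply Nat.mul_le_mul_right
        have := cars_mono b hti
        omega
      have hrun : run b i * (32 * (cars b t + 1)) ≤ 2*t := by
        rw [mul_comm]
        omega
      have := (Nat.le_div_iff_mul_le (k := 32 * (cars b t + 1)) (by positivity)).2 hrun
      show run b i < M + 1
      omega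
  have hinj : Set.InjOn (fun i => (cars b i, run b i))
      ((Finset.Ico t (2*t)).filter (fun i => ¬ gate b i) : Finset ℕ) := by
    intro i hi i' hi' heq
    simp only [Prod.mk.injEq] at heq
    obtain ⟨hc1, hr1⟩ := heq
    rcases Nat.lt_trichotomy i i' with hlt | heqq | hgt
    · exfalso
      have hnc : ∀ j, i ≤ j → j < i' → b j = false := fun j hj hj' =>
        no_car_between hc1 hj hj'
      have := run_add (b := b) (i := i) (i' := i') (by omega) hnc
      omega
    · exact heqq
    · exfalso
      have hnc : ∀ j, i' ≤ j → j < i → b j = false := fun j hj hj' =>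
        no_car_between hc1.symm hj hj'
      have := run_add (b := b) (i := i') (i' := i) (by omega) hnc
      omega
  have hcard := Finset.card_le_card_of_injOn _ hmem hinj
  calc ((Finset.Ico t (2*t)).filter (fun i => ¬ gate b i)).card
      ≤ ((Finset.Icc (cars b t) (cars b (2*t))) ×ˢ (Finset.range (M+1))).card := hcard
    _ = (Finset.Icc (cars b t) (cars b (2*t))).card * (M+1) := by
        rw [Finset.card_product, Finset.card_range]
    _ ≤ (cars b (2*t) + 1) * (M+1) := by
        apply Nat.mul_le_mul_right
        rw [Nat.card_Icc]
        omega

/-- sparse (in ℕ form) -/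
lemma sparse_nat (hsp : Tendsto (fun t : ℕ => (cars b t : ℝ)/t) atTop (nhds 0)) :
    ∀ k : ℕ, 0 < k → ∃ S₀ : ℕ, ∀ s, S₀ ≤ s → k * cars b s ≤ s := by
  intro k hk
  have hpos : (0:ℝ) < 1/(2*k) := by positivity
  have hev : ∀ᶠ s in atTop, (cars b s : ℝ)/s < 1/(2*k) := hsp.eventually (gt_mem_nhds hpos)
  obtain ⟨S₀, hS₀⟩ := Filter.eventually_atTop.1 hev
  refine ⟨max S₀ 1, fun s hs => ?_⟩
  have hsS : S₀ ≤ s := le_trans (le_max_left _ _) hs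
  have hs1 : 1 ≤ s := le_trans (le_max_right _ _) hs
  have h := hS₀ s hsS
  have hspos : (0:ℝ) < s := by exact_mod_cast hs1
  rw [div_lt_div_iff₀ hspos (by positivity)] at h
  -- h : (cars b s : ℝ) * (2*k) < 1 * s
  have h2 : ((k * cars b s : ℕ) : ℝ) < (s:ℝ) := by
    push_cast
    nlinarith [Nat.cast_nonneg (α := ℝ) (cars b s)]
  exact_mod_cast h2.le

lemma exists_good_scale (hsp : ∀ k : ℕ, 0 < k → ∃ S₀ : ℕ, ∀ s, S₀ ≤ s → k * cars b s ≤ s) :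
    ∀ T, ∃ t, T ≤ t ∧ 1 ≤ t ∧ cars b (2*t) + 1 ≤ 5 * (cars b t + 1) := by
  intro T
  by_contra hcon
  push_neg at hcon
  obtain ⟨S₀, hS₀⟩ := hsp 4 (by norm_num)
  set t₀ := max (max T S₀) 1 with ht₀
  have ht₀T : T ≤ t₀ := le_trans (le_max_left _ _) (le_max_left _ _)
  have ht₀S : S₀ ≤ t₀ := le_trans (le_max_right _ _) (le_max_left _ _)
  have ht₀1 : 1 ≤ t₀ := le_max_right _ _
  have hbase : ∀ j : ℕ, t₀ ≤ 2^j * t₀ := fun j =>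
    Nat.le_mul_of_pos_left t₀ (Nat.pow_pos (n := j) (by norm_num))
  have hgrow : ∀ j : ℕ, 5^j ≤ cars b (2^j * t₀) + 1 := by
    intro j
    induction j with
    | zero => simp
    | succ j ih =>
      have h2j : T ≤ 2^j * t₀ := le_trans ht₀T (hbase j)
      have h1j : 1 ≤ 2^j * t₀ := le_trans ht₀1 (hbase j)
      have hc5 := hcon (2^j * t₀) h2j h1j
      have heq : 2*(2^j*t₀) = 2^(j+1)*t₀ := by ring
      rw [heq] at hc5
      calc 5^(j+1) = 5 * 5^j := by ring
        _ ≤ 5 * (cars b (2^j*t₀)+1) := Nat.mul_le_mul_left 5 ih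
        _ ≤ cars b (2^(j+1)*t₀) + 1 := by omega
  set j := 2*t₀ + 4 with hj
  have h1 := hgrow j
  have h2 := hS₀ (2^j * t₀) (le_trans ht₀S (hbase j))
  have h4 : (4:ℕ)^j ≤ 5^j := Nat.pow_le_pow_left (by norm_num) j
  have h5 : (4:ℕ)^j = 2^j * 2^j := by rw [← Nat.mul_pow]
  have h6 : j + 1 ≤ 2^j := Nat.lt_two_pow_self (n := j)
  have h7 : t₀ ≤ j + 1 := by omega
  have h8 : 2^j * t₀ ≤ 2^j * 2^j := Nat.mul_le_mul_left _ (le_trans h7 h6)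
  -- 4 * 4^j ≤ 4 * 5^j ≤ 4*(cars+1) ≤ 2^j t₀ + 4
  have h9 : 4 * 4^j ≤ 2^j * t₀ + 4 := by
    have := Nat.mul_le_mul_left 4 (le_trans h4 h1)
    omega
  have h10 : (2:ℕ) ≤ 2^j := by
    calc (2:ℕ) = 2^1 := rfl
    _ ≤ 2^j := Nat.pow_le_pow_right (by norm_num) (by omega)
  -- but 4*4^j = 4 * 2^j * 2^j ≥ 4 * 2^j * t₀
  have h11 : 4 * (2^j * t₀) ≤ 4 * 4^j := by
    rw [h5]
    apply Nat.mul_le_mul_left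
    exact Nat.mul_le_mul_left _ (le_trans h7 h6)
  have h12 : 1 ≤ 2^j * t₀ := le_trans ht₀1 (hbase j)
  have h13 : 2^j * 2 ≤ 2^j * 2^j := Nat.mul_le_mul_left _ h10
  omega

end stall2

section final

open Filter

variable {c x : ℝ} {ψ : ℕ} {b : ℕ → Bool}

lemma not_summable_haz (hc : 0 < c) (hx : 0 < x) (hx1 : x < 1)
    (hsp : Tendsto (fun t : ℕ => (cars b t : ℝ)/t) atTop (nhds 0)) :
    ¬ Summable (haz c x ψ b) := by
  intro hs
  obtain ⟨T₁, hT₁⟩ := exists_T1 hc hx hx1 hs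
  obtain ⟨S₀, hS₀⟩ := sparse_nat hsp (32*(ψ+1)) (by positivity)
  obtain ⟨t, htT, ht1, hgood⟩ := exists_good_scale (sparse_nat hsp)
    (max (max T₁ S₀) (32*(Df ψ b T₁+5)))
  have htT₁ : T₁ ≤ t := le_trans (le_trans (le_max_left _ _) (le_max_left _ _)) htT
  have htS₀ : S₀ ≤ t := le_trans (le_trans (le_max_right _ _) (le_max_left _ _)) htT
  have htD : 32*(Df ψ b T₁ + 5) ≤ t := le_trans (le_max_right _ _) htT
  have hsplit := Finset.card_filter_add_card_filter_not
    (s := Finset.Ico t (2*t)) (fun i => gate b i)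
  have hwin : (Finset.Ico t (2*t)).card = t := by rw [Nat.card_Ico]; omega
  rw [hwin] at hsplit
  have hsub : (Finset.Ico t (2*t)).filter (fun i => gate b i)
      ⊆ (Finset.Ico T₁ (2*t)).filter (fun i => gate b i) :=
    Finset.filter_subset_filter _ (Finset.Ico_subset_Ico (by omega) (le_refl _))
  have hopen := le_trans (Finset.card_le_card hsub)
    (opens_le (ψ := ψ) hT₁ (s := 2*t) (by omega))
  have hclosed := closed_window_card (b := b) t
  -- abbreviations
  set M := (2*t) / (32 * (cars b t + 1)) with hM
  have hP : 32 * ((cars b t + 1) * M) ≤ 2*t := by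
    have hdm : M * (32*(cars b t + 1)) ≤ 2*t := Nat.div_mul_le_self _ _
    calc 32*((cars b t + 1)*M) = M * (32*(cars b t + 1)) := by ring
      _ ≤ 2*t := hdm
  have hcl2 : ((Finset.Ico t (2*t)).filter (fun i => ¬ gate b i)).card
      ≤ 5*((cars b t + 1)*M) + 5*(cars b t + 1) := by
    calc ((Finset.Ico t (2*t)).filter (fun i => ¬ gate b i)).card
        ≤ (cars b (2*t) + 1)*(M+1) := hclosed
      _ ≤ (5*(cars b t + 1))*(M+1) := Nat.mul_le_mul_right _ hgood
      _ = 5*((cars b t + 1)*M) + 5*(cars b t + 1) := by ring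
  have hsp1 : 32*((ψ+1)*cars b (2*t)) ≤ 2*t := by
    have := hS₀ (2*t) (by omega)
    calc 32*((ψ+1)*cars b (2*t)) = 32*(ψ+1)*cars b (2*t) := by ring
      _ ≤ 2*t := this
  have hsp2 : 32*cars b t ≤ t := by
    have h1 := hS₀ t htS₀
    have h2 : 32*cars b t ≤ 32*(ψ+1)*cars b t := by
      have : (32:ℕ) ≤ 32*(ψ+1) := by
        have : 1 ≤ ψ + 1 := by omega
        calc (32:ℕ) = 32*1 := by ring
          _ ≤ 32*(ψ+1) := Nat.mul_le_mul_left _ this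
      exact Nat.mul_le_mul_right _ this
    omega
  set OP := ((Finset.Ico t (2*t)).filter (fun i => gate b i)).card
  set CL := ((Finset.Ico t (2*t)).filter (fun i => ¬ gate b i)).card
  set P := (cars b t + 1)*M with hPdef
  set Q := (ψ+1)*cars b (2*t) with hQdef
  clear_value P Q OP CL
  omega

end final

end P2



open P2

/-- Puzzle 2: for every `δ > 0` there is a frog-strategy succeeding with probability
`≥ 1 - δ` on every sparse car-stream (one with `lim_{t→∞} N_t(b)/t = 0`),
i.e. `Succ(S, A_{sp}) ≥ 1 - δ`. -/
theorem puzzle2 (δ : ℝ) (hδ : 0 < δ) :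
    ∃ S : FrogStrategy, ∀ b : ℕ → Bool,
      Filter.Tendsto (fun t : ℕ => (cars b t : ℝ) / t) Filter.atTop (nhds 0) →
      1 - δ ≤ succProb S b := by
  set δ' := min δ 1 with hδ'def
  have hδ'pos : 0 < δ' := lt_min hδ one_pos
  have hδ'le1 : δ' ≤ 1 := min_le_right δ 1
  have hδ'leδ : δ' ≤ δ := min_le_left δ 1
  set lam : ℝ := δ'/8 with hlamdef
  have hlam : 0 < lam := by positivity
  have hlam8 : lam ≤ 1/8 := by rw [hlamdef]; linarith
  have hc1 : lam ≤ 1 := by linarith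
  set ψ : ℕ := ⌈(1:ℝ)/lam⌉₊ with hψdef
  have hψr : 1 ≤ lam * (ψ:ℝ) := by
    have h1 : (1:ℝ)/lam ≤ (ψ:ℝ) := Nat.le_ceil _
    calc (1:ℝ) = lam * (1/lam) := by field_simp
      _ ≤ lam * (ψ:ℝ) := by
          apply mul_le_mul_of_nonneg_left h1 hlam.le
  set x : ℝ := (1+lam)⁻¹ with hxdef
  have h1lam : (0:ℝ) < 1 + lam := by linarith
  have hx : 0 < x := by positivity
  have hx1 : x < 1 := by
    rw [hxdef, inv_lt_one_iff₀]
    right; linarith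
  have hxlam : x * (1 + lam) = 1 := inv_mul_cancel₀ (by linarith)
  set A : ℝ := (1 + lam*(ψ:ℝ))/(lam*(ψ:ℝ)) with hAdef
  have hlψ : (0:ℝ) < lam*(ψ:ℝ) := by linarith
  have hA : 0 ≤ A := by positivity
  have hA2 : A ≤ 2 := by
    rw [hAdef, div_le_iff₀ hlψ]
    linarith
  have hA1 : 1 ≤ A * (1 - x ^ ψ) := by
    have hpow : 1 + (ψ:ℝ)*lam ≤ (1+lam)^ψ := one_add_mul_le_pow (by linarith) ψ
    have hxψ : x^ψ = ((1+lam)^ψ)⁻¹ := by rw [hxdef, inv_pow]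
    have hposp : (0:ℝ) < 1 + (ψ:ℝ)*lam := by nlinarith
    have hxψle : x^ψ ≤ (1 + (ψ:ℝ)*lam)⁻¹ := by
      rw [hxψ]
      exact inv_anti₀ hposp hpow
    have hval : A * (1 - (1 + (ψ:ℝ)*lam)⁻¹) = 1 := by
      rw [hAdef]
      field_simp
      field_simp [show (ψ:ℝ) ≠ 0 from fun h => by simp [h] at hlψ]
      ring
    calc (1:ℝ) = A * (1 - (1 + (ψ:ℝ)*lam)⁻¹) := hval.symm
      _ ≤ A * (1 - x^ψ) := by
          apply mul_le_mul_of_nonneg_left _ hA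
          linarith
  have hnn : ∀ (b : ℕ → Bool) (o : Option ℕ), 0 ≤ sprob lam x ψ b o := by
    intro b o
    match o with
    | none => exact WInf_nonneg hlam.le hc1 hx.le hx1.le
    | some i =>
      exact mul_nonneg (haz_nonneg hlam.le hx.le i) (W_nonneg hlam.le hx.le hx1.le hc1 i)
  have htot : ∀ (b : ℕ → Bool), ∑' o : Option ℕ, sprob lam x ψ b o = 1 := by
    intro b
    exact (hasSum_sprob hlam.le hc1 hx.le hx1.le).tsum_eq
  have hadp : ∀ (b b' : ℕ → Bool) (i : ℕ), (∀ j, j < i → b j = b' j) →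
      sprob lam x ψ b (some i) = sprob lam x ψ b' (some i) := by
    intro b b' i h
    show haz lam x ψ b i * W lam x ψ b i = haz lam x ψ b' i * W lam x ψ b' i
    rw [haz_congr (b := b) (b' := b') h, W_congr (b := b) (b' := b') h]
  refine ⟨⟨fun b o => sprob lam x ψ b o, hnn, htot, hadp⟩, ?_⟩
  intro b hb
  have hsucc : succProb ⟨fun b o => sprob lam x ψ b o, hnn, htot, hadp⟩ b
      = ∑' i, if b i = false then haz lam x ψ b i * W lam x ψ b i else 0 := rfl
  rw [hsucc, succ_tsum_eq hlam.le hc1 hx.le hx1.le]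
  have hWInf : WInf lam x ψ b = 0 :=
    WInf_eq_zero_of_not_summable hlam hc1 hx hx1.le (not_summable_haz hlam hx hx1 hb)
  have hdeath := death_tsum_le (b := b) (ψ := ψ) A hA hlam hc1 hx hx1.le hlam.le hxlam hA1
  have hfin : A * (lam + lam) ≤ δ := by
    have h2 : A * (lam + lam) ≤ 2 * (lam + lam) := by
      apply mul_le_mul_of_nonneg_right hA2 (by linarith)
    have h3 : 2 * (lam + lam) = δ'/2 := by rw [hlamdef]; ring
    linarith
  rw [hWInf]
  linarith
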